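/- Let n, d ≥ 1, μ > 0, let A be an n×d real matrix, and let G be a d×d real symmetric matrix with G ⪰ μ·I_d. Then trace( A (AᵀA + G)^{-1} Aᵀ ) ≤ trace( AᵀA (AᵀA + μ·I_d)^{-1} ). In particular the left-hand side is bounded by the effective dimension d_μ := trace(AᵀA (AᵀA + μ I_d)^{-1}). (Inequality (frobnormeffdim) established in the proof of Lemma 1; note AᵀA + G and AᵀA + μI_d are positive definite, hence invertible.) -/

import Mathlib

open Matrix

lemma psd_trace_nonneg {d : ℕ} {P : Matrix (Fin d) (Fin d) ℝ} (hP : P.PosSemidef) :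
    0 ≤ trace P := by
  rw [Matrix.trace]
  apply Finset.sum_nonneg
  intro i _
  exact hP.diag_nonneg

/-- Inequality (frobnormeffdim) from the proof of Lemma 1: if `G ⪰ μ I_d`, then
`trace(A (AᵀA + G)⁻¹ Aᵀ) ≤ trace(AᵀA (AᵀA + μ I_d)⁻¹)`, the effective dimension. -/
theorem trace_le_effective_dimension
    (n d : ℕ) (hn : 1 ≤ n) (hd : 1 ≤ d) (μ : ℝ) (hμ : 0 < μ)
    (A : Matrix (Fin n) (Fin d) ℝ)
    (G : Matrix (Fin d) (Fin d) ℝ) (hG : G.IsHermitian)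
    (hGμ : (G - μ • (1 : Matrix (Fin d) (Fin d) ℝ)).PosSemidef) :
    trace (A * (Aᵀ * A + G)⁻¹ * Aᵀ) ≤
      trace (Aᵀ * A * (Aᵀ * A + μ • (1 : Matrix (Fin d) (Fin d) ℝ))⁻¹) := by
  set S : Matrix (Fin d) (Fin d) ℝ := G - μ • (1 : Matrix (Fin d) (Fin d) ℝ) with hS
  set N : Matrix (Fin d) (Fin d) ℝ := Aᵀ * A + μ • (1 : Matrix (Fin d) (Fin d) ℝ) with hNdef
  set M : Matrix (Fin d) (Fin d) ℝ := Aᵀ * A + G with hMdef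
  have hAT : Aᵀ = Aᴴ := (conjTranspose_eq_transpose_of_trivial A).symm
  have hAtA : (Aᵀ * A).PosSemidef := by
    rw [hAT]; exact posSemidef_conjTranspose_mul_self A
  have hμ1 : ((μ : ℝ) • (1 : Matrix (Fin d) (Fin d) ℝ)).PosDef := by
    rw [smul_one_eq_diagonal]
    exact posDef_diagonal_iff.mpr fun _ => hμ
  have hN : N.PosDef := Matrix.PosDef.posSemidef_add hAtA hμ1
  have hMN : M = N + S := by rw [hMdef, hNdef, hS]; abel
  have hM : M.PosDef := by
    rw [hMN]; exact hN.add_posSemidef hGμ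
  -- invertibility facts
  have hMdet : IsUnit M.det := hM.det_pos.ne'.isUnit
  have hNdet : IsUnit N.det := hN.det_pos.ne'.isUnit
  have hMinv : M⁻¹ * M = 1 := nonsing_inv_mul M hMdet
  have hMinv' : M * M⁻¹ = 1 := mul_nonsing_inv M hMdet
  have hNinv : N⁻¹ * N = 1 := nonsing_inv_mul N hNdet
  have hNinv' : N * N⁻¹ = 1 := mul_nonsing_inv N hNdet
  -- key identity: N⁻¹ - M⁻¹ = M⁻¹ * (S + S * N⁻¹ * S) * M⁻¹
  have hMid : M * (N⁻¹ - M⁻¹) * M = S + S * N⁻¹ * S := by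
    have : M * (N⁻¹ - M⁻¹) * M = M * N⁻¹ * M - M := by
      rw [Matrix.mul_sub, Matrix.sub_mul, hMinv', Matrix.one_mul]
    rw [this, hMN]
    have h1 : (N + S) * N⁻¹ = 1 + S * N⁻¹ := by
      rw [Matrix.add_mul, hNinv']
    rw [h1, Matrix.add_mul, Matrix.one_mul, Matrix.mul_add, Matrix.mul_assoc, hNinv,
      Matrix.mul_one]
    abel
  have key : N⁻¹ - M⁻¹ = M⁻¹ * (S + S * N⁻¹ * S) * M⁻¹ := by
    calc N⁻¹ - M⁻¹ = M⁻¹ * (M * (N⁻¹ - M⁻¹) * M) * M⁻¹ := by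
          rw [Matrix.mul_assoc, Matrix.mul_assoc, hMinv', Matrix.mul_one,
            ← Matrix.mul_assoc, hMinv, Matrix.one_mul]
      _ = M⁻¹ * (S + S * N⁻¹ * S) * M⁻¹ := by rw [hMid]
  -- N⁻¹ - M⁻¹ is PSD
  have hMinvHerm : M⁻¹.IsHermitian := hM.isHermitian.inv
  have hSherm : S.IsHermitian := hGμ.isHermitian
  have hNinvPsd : N⁻¹.PosSemidef := hN.posSemidef.inv
  have hinner : (S + S * N⁻¹ * S).PosSemidef := by
    refine hGμ.add ?_
    have := hNinvPsd.conjTranspose_mul_mul_same S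
    rwa [hSherm.eq] at this
  have hP : (N⁻¹ - M⁻¹).PosSemidef := by
    rw [key]
    have := hinner.conjTranspose_mul_mul_same M⁻¹
    rwa [hMinvHerm.eq] at this
  -- conjugate by A
  have hAPA : (A * (N⁻¹ - M⁻¹) * Aᵀ).PosSemidef := by
    have := hP.mul_mul_conjTranspose_same A
    rwa [← hAT] at this
  have htr : 0 ≤ trace (A * (N⁻¹ - M⁻¹) * Aᵀ) := psd_trace_nonneg hAPA
  -- rewrite traces
  have hcomm : ∀ X : Matrix (Fin d) (Fin d) ℝ,
      trace (A * X * Aᵀ) = trace (Aᵀ * A * X) := by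
    intro X
    rw [trace_mul_comm, ← Matrix.mul_assoc]
  have hRHS : trace (Aᵀ * A * N⁻¹) = trace (A * N⁻¹ * Aᵀ) := (hcomm N⁻¹).symm
  have hexp : trace (A * (N⁻¹ - M⁻¹) * Aᵀ)
      = trace (A * N⁻¹ * Aᵀ) - trace (A * M⁻¹ * Aᵀ) := by
    rw [Matrix.mul_sub, Matrix.sub_mul, trace_sub]
  rw [hRHS]
  linarith [htr, hexp.symm.le, hexp.le]
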